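/- Symmetric linearization: in the symmetric case, for ℓ + m ≤ N, k_ℓ(j,N)·k_m(j,N) = Σ_n C(n, (ℓ−m+n)/2) · C(N−n, (ℓ+m−n)/2) · k_n(j,N) for all 0 ≤ j ≤ N, where the sum runs over n with ℓ+m−n even, |ℓ−m| ≤ n ≤ ℓ+m. -/

import Mathlib

open Finset

noncomputable def skraw (N j n : ℕ) : ℝ :=
  ∑ i ∈ Finset.range (n + 1), ((N - j).choose (n - i) : ℝ) * (j.choose i : ℝ) * (-1) ^ i

namespace SkrawAux

open Polynomial

lemma coeff_one_sub_X_pow (j i : ℕ) :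
    ((1 - X : Polynomial ℝ)^j).coeff i = (-1)^i * (j.choose i : ℝ) := by
  induction j generalizing i with
  | zero =>
      cases i with
      | zero => simp
      | succ i => simp [coeff_one]
  | succ j ih =>
      have : (1 - X : Polynomial ℝ)^(j+1) = (1-X)^j - (1-X)^j * X := by ring
      rw [this]
      cases i with
      | zero => simp [ih]
      | succ i =>
          rw [coeff_sub, coeff_mul_X, ih, ih, Nat.choose_succ_succ]
          push_cast
          ring

noncomputable def pp (N j : ℕ) : Polynomial ℝ := (1+X)^(N-j) * (1-X)^j

lemma pp_coeff (N j n : ℕ) : (pp N j).coeff n = skraw N j n := by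
  rw [pp, mul_comm, coeff_mul, Finset.Nat.sum_antidiagonal_eq_sum_range_succ_mk, skraw]
  refine Finset.sum_congr rfl fun i _ => ?_
  rw [coeff_one_sub_X_pow, Polynomial.coeff_one_add_X_pow]
  ring

lemma pp_natDegree (N j : ℕ) (hj : j ≤ N) : (pp N j).natDegree < N + 1 := by
  have h1 : ((1+X:Polynomial ℝ)^(N-j)).natDegree ≤ (N-j) * 1 :=
    natDegree_pow_le.trans (by gcongr; exact (natDegree_add_le _ _).trans (by simp))
  have h2 : ((1-X:Polynomial ℝ)^j).natDegree ≤ j * 1 :=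
    natDegree_pow_le.trans (by gcongr; exact (natDegree_sub_le _ _).trans (by simp))
  have := natDegree_mul_le (p := (1+X:Polynomial ℝ)^(N-j)) (q := (1-X)^j)
  rw [pp]
  omega

abbrev SS := Polynomial (Polynomial ℝ)

lemma key (N j : ℕ) (hj : j ≤ N) :
    ((1 + X : SS)^(N-j) * (1 - X)^j) * (C (pp N j)) =
      ∑ n ∈ range (N+1), C (C ((pp N j).coeff n)) * (X + C X)^n * (1 + X * C X)^(N-n) := by
  set K := FractionRing SS
  have hinj : Function.Injective (algebraMap SS K) := IsFractionRing.injective SS K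
  apply hinj
  set φ := algebraMap SS K with hφ
  set z : K := φ (1 + X * C X) with hzdef
  set u : K := φ (X + C X) with hudef
  have hz : z ≠ 0 := by
    rw [hzdef]
    intro h
    have h0 : (1 + X * C X : SS) = 0 := hinj (by simpa using h)
    have := congrArg (fun p : SS => p.coeff 0) h0
    simp at this
  set ψ : ℝ →+* K := φ.comp ((Polynomial.C : Polynomial ℝ →+* SS).comp (Polynomial.C : ℝ →+* Polynomial ℝ)) with hψ
  have hRHS : φ (∑ n ∈ range (N+1), C (C ((pp N j).coeff n)) * (X + C X)^n * (1 + X * C X)^(N-n))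
      = z^N * (pp N j).eval₂ ψ (u * z⁻¹) := by
    rw [map_sum, Polynomial.eval₂_eq_sum_range' ψ (pp_natDegree N j hj)]
    rw [Finset.mul_sum]
    refine Finset.sum_congr rfl fun n hn => ?_
    have hnN : n ≤ N := by simpa using Nat.lt_succ_iff.mp (Finset.mem_range.mp hn)
    rw [map_mul, map_mul, map_pow, map_pow]
    have hzn : z^(N-n) = z^N * (z⁻¹)^n := by
      rw [inv_pow, eq_comm, mul_inv_eq_iff_eq_mul₀ (pow_ne_zero _ hz), ← pow_add]
      congr 1
      omega
    rw [hzn]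
    have : φ (C (C ((pp N j).coeff n))) = ψ ((pp N j).coeff n) := rfl
    rw [this, mul_pow]
    ring
  rw [hRHS]
  have heval : (pp N j).eval₂ ψ (u * z⁻¹) = (1 + u * z⁻¹)^(N-j) * (1 - u * z⁻¹)^j := by
    rw [pp]
    simp [eval₂_mul, eval₂_pow, eval₂_add, eval₂_sub, eval₂_one, eval₂_X]
  rw [heval]
  symm
  have hzN : z^N = z^(N-j) * z^j := by rw [← pow_add]; congr 1; omega
  have hzu1 : z * (1 + u * z⁻¹) = z + u := by rw [mul_add, mul_one, mul_left_comm, mul_inv_cancel₀ hz, mul_one]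
  have hzu2 : z * (1 - u * z⁻¹) = z - u := by rw [mul_sub, mul_one, mul_left_comm, mul_inv_cancel₀ hz, mul_one]
  calc z ^ N * ((1 + u * z⁻¹) ^ (N - j) * (1 - u * z⁻¹) ^ j)
      = (z * (1 + u * z⁻¹))^(N-j) * (z * (1 - u * z⁻¹))^j := by rw [hzN, mul_pow, mul_pow]; ring
    _ = (z + u)^(N-j) * (z - u)^j := by rw [hzu1, hzu2]
    _ = φ (((1 + X : SS)^(N-j) * (1 - X)^j) * (C (pp N j))) := by
        have h1 : z + u = φ ((1 + X) * (1 + C X)) := by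
          rw [hzdef, hudef, ← map_add]; congr 1; ring
        have h2 : z - u = φ ((1 - X) * (1 - C X)) := by
          rw [hzdef, hudef, ← map_sub]; congr 1; ring
        rw [h1, h2, ← map_pow, ← map_pow, ← map_mul]
        congr 1
        rw [mul_pow, mul_pow, pp, Polynomial.C_mul, Polynomial.C_pow, Polynomial.C_pow, map_add, map_sub, map_one]
        ring

lemma eterm_lemma (N l m n a s : ℕ) :
    coeff (coeff (C ((X:Polynomial ℝ)^(n-a) * (n.choose a : Polynomial ℝ)) * (X:SS)^a *
        (C ((X:Polynomial ℝ)^s * ((N-n).choose s : Polynomial ℝ)) * (X:SS)^s)) l) m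
      = if a + s = l ∧ (n - a) + s = m then (n.choose a : ℝ) * ((N-n).choose s : ℝ) else 0 := by
  have hterm : C ((X:Polynomial ℝ)^(n-a) * (n.choose a : Polynomial ℝ)) * (X:SS)^a *
        (C ((X:Polynomial ℝ)^s * ((N-n).choose s : Polynomial ℝ)) * (X:SS)^s)
      = C (Polynomial.C ((n.choose a : ℝ) * ((N-n).choose s : ℝ)) * (X:Polynomial ℝ)^(n-a+s)) * (X:SS)^(a+s) := by
    simp only [map_mul, map_natCast, map_pow, pow_add]
    ring
  rw [hterm, coeff_C_mul, coeff_X_pow, mul_ite, mul_one, mul_zero]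
  by_cases h1 : l = a + s
  · rw [if_pos h1, coeff_C_mul, coeff_X_pow, mul_ite, mul_one, mul_zero]
    split_ifs with h2 h3 h3 <;> first | rfl | (exfalso; omega)
  · rw [if_neg h1, coeff_zero, eq_comm, if_neg (by omega)]

lemma coeff_term (N l m n : ℕ) (hlm : l + m ≤ N) (hn : n ≤ N) :
    coeff (coeff (((X + C X : SS))^n * (1 + X * C X)^(N-n)) l) m
      = if (l + m - n) % 2 = 0 ∧ m ≤ l + n ∧ l ≤ m + n ∧ n ≤ l + m then
          (n.choose ((l + n - m) / 2) : ℝ) * ((N - n).choose ((l + m - n) / 2) : ℝ)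
        else 0 := by
  have e1 : ((X + C X : SS))^n = ∑ a ∈ range (n+1), C ((X:Polynomial ℝ)^(n-a) * (n.choose a : Polynomial ℝ)) * X^a := by
    rw [add_pow]
    refine Finset.sum_congr rfl fun a _ => ?_
    rw [Polynomial.C_mul, ← Polynomial.C_pow, map_natCast]
    ring
  have e2 : ((1 + X * C X : SS))^(N-n) = ∑ s ∈ range (N-n+1), C ((X:Polynomial ℝ)^s * ((N-n).choose s : Polynomial ℝ)) * X^s := by
    rw [add_comm, add_pow]
    refine Finset.sum_congr rfl fun s _ => ?_
    rw [Polynomial.C_mul, map_natCast, mul_pow, ← Polynomial.C_pow, one_pow, mul_one]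
    ring
  rw [e1, e2, Finset.sum_mul_sum]
  simp only [finset_sum_coeff]
  rw [Finset.sum_congr rfl (fun a _ => Finset.sum_congr rfl (fun s _ => eterm_lemma N l m n a s))]
  by_cases hcond : (l + m - n) % 2 = 0 ∧ m ≤ l + n ∧ l ≤ m + n ∧ n ≤ l + m
  · obtain ⟨hpar, h1, h2, h3⟩ := hcond
    rw [if_pos ⟨hpar, h1, h2, h3⟩]
    rw [Finset.sum_eq_single_of_mem ((l + n - m) / 2) (by rw [mem_range]; omega)
      (fun b hb hne => Finset.sum_eq_zero (fun s hs => by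
        rw [mem_range] at hb hs
        rw [if_neg (by omega)]))]
    rw [Finset.sum_eq_single_of_mem ((l + m - n) / 2) (by rw [mem_range]; omega)
      (fun s hs hne => by
        rw [mem_range] at hs
        rw [if_neg (by omega)])]
    rw [if_pos (by omega)]
  · rw [if_neg hcond]
    refine Finset.sum_eq_zero fun a ha => Finset.sum_eq_zero fun s hs => ?_
    rw [mem_range] at ha hs
    rw [if_neg (by omega)]

end SkrawAux

open SkrawAux Polynomial in
theorem skraw_linearization (N l m j : ℕ) (hlm : l + m ≤ N) (hj : j ≤ N) :
    skraw N j l * skraw N j m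
      = ∑ n ∈ Finset.range (N + 1),
          (if (l + m - n) % 2 = 0 ∧ m ≤ l + n ∧ l ≤ m + n ∧ n ≤ l + m then
              ((n.choose ((l + n - m) / 2) : ℝ) * ((N - n).choose ((l + m - n) / 2) : ℝ))
            else 0) * skraw N j n := by
  simp only [← pp_coeff]
  have h := congrArg (fun q : SS => coeff (coeff q l) m) (key N j hj)
  rw [coeff_mul_C] at h
  have hmapl : ((1 + X : SS)^(N-j) * (1 - X)^j).coeff l = Polynomial.C ((pp N j).coeff l) := by
    have : ((1 + X : SS)^(N-j) * (1 - X)^j) = (pp N j).map (Polynomial.C : ℝ →+* Polynomial ℝ) := by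
      simp [pp, Polynomial.map_mul, Polynomial.map_pow, Polynomial.map_add, Polynomial.map_sub,
        Polynomial.map_one, Polynomial.map_X]
    rw [this, Polynomial.coeff_map]
  rw [hmapl] at h
  simp only [coeff_C_mul, finset_sum_coeff, mul_assoc] at h
  rw [h]
  refine Finset.sum_congr rfl fun n hn => ?_
  rw [mem_range] at hn
  rw [coeff_term N l m n hlm (by omega)]
  ring
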